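/- arXiv:1807.10365 — 2 statements merged into one kernel-verified Lean document; each statement's English description precedes it below -/
import Mathlib

section
/- Let $1<p<N$ and set $p' = p/(p-1)$, $\kappa = (N-p)/(p-1)$. Then the radial function $U_1(x) = \left(\frac{\kappa^{1/p'} N^{1/p}}{1+|x|^{p'}}\right)^{\kappa/p'}$ on $\mathbb{R}^N$ satisfies $-\Delta_p U_1 = U_1^{p^*-1}$ in $\mathbb{R}^N \setminus \{0\}$, where $\Delta_p u = \mathrm{div}(|\nabla u|^{p-2}\nabla u)$ and $p^* = pN/(N-p)$. -/
open Real

/-- The radial Aubin–Talenti function `U₁(x) = (κ^(1/p') N^(1/p) / (1+|x|^{p'}))^{κ/p'}`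
satisfies `-Δ_p U₁ = U₁^{p^*-1}` away from the origin, expressed in the radial form of the
`p`-Laplacian: for `u(x) = f(|x|)`, `Δ_p u = (|f'|^{p-2}f')' + (N-1)/r · |f'|^{p-2}f'`. -/
theorem stmt0 (N : ℕ) (p p' κ pstar : ℝ) (hp1 : 1 < p) (hpN : p < N)
    (hp' : p' = p / (p - 1)) (hκ : κ = ((N : ℝ) - p) / (p - 1))
    (hps : pstar = p * N / ((N : ℝ) - p))
    (f : ℝ → ℝ)
    (hf : ∀ r : ℝ, f r = (κ ^ (1 / p') * (N : ℝ) ^ (1 / p) / (1 + r ^ p')) ^ (κ / p')) :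
    ∀ r : ℝ, 0 < r →
      -((deriv (fun s => |deriv f s| ^ (p - 2) * deriv f s) r)
          + ((N : ℝ) - 1) / r * (|deriv f r| ^ (p - 2) * deriv f r))
        = (f r) ^ (pstar - 1) := by
  have hp0 : (0:ℝ) < p := lt_trans one_pos hp1
  have hN0 : (0:ℝ) < N := lt_trans hp0 hpN
  have hpm1 : (0:ℝ) < p - 1 := sub_pos.mpr hp1
  have hNp : (0:ℝ) < (N:ℝ) - p := sub_pos.mpr hpN
  have hκ0 : 0 < κ := hκ ▸ div_pos hNp hpm1
  have hp'0 : 0 < p' := hp' ▸ div_pos hp0 hpm1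
  set A : ℝ := κ ^ (1/p') * (N:ℝ) ^ (1/p) with hAdef
  have hA0 : 0 < A := mul_pos (rpow_pos_of_pos hκ0 _) (rpow_pos_of_pos hN0 _)
  set m : ℝ := (N:ℝ) * (p - 1) / p with hmdef
  set D : ℝ := κ * A ^ (κ/p') with hDdef
  have hD0 : 0 < D := mul_pos hκ0 (rpow_pos_of_pos hA0 _)
  set B : ℝ := D ^ (p - 1) with hBdef
  have hB0 : 0 < B := rpow_pos_of_pos hD0 _
  -- exponent identities
  have e1 : (p' - 1) * (p - 1) = 1 := by
    rw [hp']; field_simp; ring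
  have e2 : (-(κ/p') - 1) * (p - 1) = -m := by
    rw [hp', hκ, hmdef]; field_simp; ring
  have e3 : m * p' = N := by
    rw [hp', hmdef]; field_simp
  have hXpos : ∀ s : ℝ, 0 < s → (0:ℝ) < 1 + s ^ p' := fun s hs =>
    add_pos one_pos (rpow_pos_of_pos hs _)
  -- derivative of f
  have hderiv : ∀ s : ℝ, 0 < s →
      HasDerivAt f (-(D * s ^ (p'-1) * (1 + s ^ p') ^ (-(κ/p') - 1))) s := by
    intro s hs
    have hX := hXpos s hs
    have h1 : HasDerivAt (fun t : ℝ => t ^ p') (p' * s ^ (p' - 1)) s :=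
      Real.hasDerivAt_rpow_const (Or.inl hs.ne')
    have h2 : HasDerivAt (fun t : ℝ => 1 + t ^ p') (p' * s ^ (p' - 1)) s := by
      exact ((hasDerivAt_const s (1:ℝ)).add h1).congr_deriv (zero_add _)
    have h3 : HasDerivAt (fun t : ℝ => A / (1 + t ^ p'))
        ((0 * (1 + s ^ p') - A * (p' * s ^ (p'-1))) / (1 + s ^ p') ^ 2) s :=
      (hasDerivAt_const s A).div h2 hX.ne'
    have h4 := h3.rpow_const (p := κ/p') (Or.inl (div_pos hA0 hX).ne')
    have hfe : f = fun t => (A / (1 + t ^ p')) ^ (κ/p') := by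
      funext t; rw [hf t, hAdef]
    rw [hfe]
    convert h4 using 1
    rw [Real.div_rpow hA0.le hX.le]
    rw [Real.rpow_sub hA0, Real.rpow_sub hX, Real.rpow_sub hX, Real.rpow_neg hX.le,
      Real.rpow_one, Real.rpow_one, hDdef]
    have hXr : (0:ℝ) < (1 + s ^ p') ^ (κ/p') := rpow_pos_of_pos hX _
    field_simp
    ring
  -- the quantity |f'|^(p-2) f' equals g
  have heq : ∀ s : ℝ, 0 < s →
      |deriv f s| ^ (p-2) * deriv f s = -(B * s * (1 + s ^ p') ^ (-m)) := by
    intro s hs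
    have hX := hXpos s hs
    have hd := (hderiv s hs).deriv
    set E : ℝ := D * s ^ (p'-1) * (1 + s ^ p') ^ (-(κ/p') - 1) with hEdef
    have hE0 : 0 < E :=
      mul_pos (mul_pos hD0 (rpow_pos_of_pos hs _)) (rpow_pos_of_pos hX _)
    rw [hd, abs_neg, abs_of_pos hE0]
    have : E ^ (p-2) * -E = -(E ^ (p-1)) := by
      have : E ^ (p-2) * E = E ^ (p-1) := by
        rw [← Real.rpow_add_one hE0.ne']; ring_nf
      rw [← this]; ring
    rw [this]
    have : E ^ (p-1) = B * s * (1 + s ^ p') ^ (-m) := by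
      rw [hEdef, Real.mul_rpow (mul_pos hD0 (rpow_pos_of_pos hs _)).le (rpow_pos_of_pos hX _).le,
        Real.mul_rpow hD0.le (rpow_pos_of_pos hs _).le,
        ← Real.rpow_mul hs.le, ← Real.rpow_mul hX.le, e1, e2, Real.rpow_one, hBdef]
    rw [this]
  -- more identities
  have e4 : κ/p' * (pstar - 1) = m + 1 := by
    rw [hp', hκ, hps, hmdef]; field_simp; ring
  have e5 : A ^ (m+1) = B * N := by
    have e5a : m + 1 = κ/p' * (p-1) + p := by
      rw [hp', hκ, hmdef]; field_simp; ring
    have e6 : A ^ p = κ ^ (p-1) * N := by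
      rw [hAdef, Real.mul_rpow (rpow_pos_of_pos hκ0 _).le (rpow_pos_of_pos hN0 _).le,
        ← Real.rpow_mul hκ0.le, ← Real.rpow_mul hN0.le]
      have h1p : 1/p' * p = p - 1 := by rw [hp']; field_simp
      have h2p : 1/p * p = 1 := by field_simp
      rw [h1p, h2p, Real.rpow_one]
    rw [e5a, Real.rpow_add hA0, Real.rpow_mul hA0.le, e6, hBdef, hDdef,
      Real.mul_rpow hκ0.le (rpow_pos_of_pos hA0 _).le]
    ring
  clear_value B
  clear_value D
  clear_value m
  clear_value A
  intro r hr
  have hX := hXpos r hr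
  have h1 : HasDerivAt (fun t : ℝ => t ^ p') (p' * r ^ (p' - 1)) r :=
    Real.hasDerivAt_rpow_const (Or.inl hr.ne')
  have h2 : HasDerivAt (fun t : ℝ => 1 + t ^ p') (p' * r ^ (p' - 1)) r := by
    exact ((hasDerivAt_const r (1:ℝ)).add h1).congr_deriv (zero_add _)
  have h5 := h2.rpow_const (p := -m) (Or.inl hX.ne')
  have h6 : HasDerivAt (fun t : ℝ => -(B * t * (1 + t ^ p') ^ (-m)))
      (-(B * ((1 + r ^ p') ^ (-m)
        + r * (-m * (1 + r ^ p') ^ (-m - 1) * (p' * r ^ (p' - 1)))))) r := by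
    have h7 := (((hasDerivAt_id r).mul h5).const_mul B).neg
    have hfe : (fun t : ℝ => -(B * t * (1 + t ^ p') ^ (-m)))
        = fun t : ℝ => -(B * (t * (1 + t ^ p') ^ (-m))) := by
      funext t; ring
    rw [hfe]
    simp only [id_eq] at h7
    refine h7.congr_deriv ?_
    ring
  have hev : (fun s => |deriv f s| ^ (p-2) * deriv f s)
      =ᶠ[nhds r] (fun s => -(B * s * (1 + s ^ p') ^ (-m))) := by
    filter_upwards [IsOpen.mem_nhds isOpen_Ioi hr] with s hs using heq s hs
  rw [hev.deriv_eq, h6.deriv, heq r hr, hf r,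
    ← Real.rpow_mul (div_pos hA0 hX).le, e4, Real.div_rpow hA0.le hX.le, e5]
  have hrr : r ^ (p' - 1) * r = r ^ p' := by
    rw [← Real.rpow_add_one hr.ne']; ring_nf
  have hXX : (1 + r ^ p') ^ (-m) = (1 + r ^ p') ^ (-m - 1) * (1 + r ^ p') := by
    rw [← Real.rpow_add_one hX.ne']; ring_nf
  have hXinv : (1 + r ^ p') ^ (-m - 1) = ((1 + r ^ p') ^ (m + 1))⁻¹ := by
    rw [← Real.rpow_neg hX.le]; ring_nf
  have hXp1 : (0:ℝ) < (1 + r ^ p') ^ (m + 1) := rpow_pos_of_pos hX _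
  rw [hXX, hXinv]
  set u : ℝ := r ^ p' with hu
  set q : ℝ := r ^ (p' - 1) with hq
  field_simp
  linear_combination (-(q * r)) * e3
    + (-(N:ℝ)) * hrr
end

section
/- Let $N \ge 2$, $2 \le p < N$, $\mu > 0$, $\gamma > 0$, and suppose $N - 1 - 2\gamma(p-1) \le 0$ and $\gamma(N - p - \gamma(p-1)) \le 0$. Define $h(r) := r^{-\gamma} e^{-\mu r}$ for $r > 0$. Then for all $r > 0$, the radial $p$-Laplacian of $h$ satisfies $-\left[ (|h'|^{p-2} h')' + \frac{N-1}{r} |h'|^{p-2} h' \right] + \mu^p (p-1) h^{p-1} \le \mu \frac{\gamma^{p-2}(N-1-2\gamma(p-1))}{r^{p-1}} h^{p-1} + \frac{\gamma^{p-1}(N-p-\gamma(p-1))}{r^p} h^{p-1}$. -/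
set_option maxHeartbeats 2000000

open Real Filter

private lemma rpow_split {x : ℝ} (hx : x ≠ 0) {q q' : ℝ} (h : q' = q + 1) :
    x ^ q' = x ^ q * x := by
  rw [h, Real.rpow_add_one hx]

private lemma scalar_key (c γ α a μ P Q M : ℝ) (hc : 1 ≤ c) (hγ : 0 < γ)
    (ha : 0 < a) (hμ : 0 < μ)
    (hQP : P ≤ Q) (hQM : M ≤ Q)
    (hsup : a * P + μ * M ≤ (a + μ) * Q)
    (h1 : α ≤ 2 * γ * c) (h2 : α ≤ c * (1 + γ)) :
    α * a * ((a + μ) * Q - μ * P - a * P)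
      ≤ c * a ^ 2 * (Q - P)
        + γ * c * ((a + μ) ^ 2 * Q - μ ^ 2 * M - a ^ 2 * P - 2 * μ * a * P) := by
  have hc0 : (0:ℝ) ≤ c := by linarith
  have hX : 0 ≤ (a + μ) * Q - μ * P - a * P := by
    nlinarith [mul_nonneg (by linarith : (0:ℝ) ≤ a + μ) (sub_nonneg.2 hQP)]
  have hZX : a * ((a + μ) * Q - μ * P - a * P)
      ≤ (a + μ) ^ 2 * Q - μ ^ 2 * M - a ^ 2 * P - 2 * μ * a * P := by
    nlinarith [mul_nonneg hμ.le (by linarith : (0:ℝ) ≤ (a + μ) * Q - μ * M - a * P)]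
  rcases le_total γ 1 with hγ1 | hγ1
  · nlinarith [mul_nonneg (sub_nonneg.2 h1) (mul_nonneg ha.le hX),
      mul_nonneg (mul_nonneg (mul_nonneg (sub_nonneg.2 hγ1) hc0) (sq_nonneg a)) (sub_nonneg.2 hQP),
      mul_nonneg (mul_nonneg (mul_nonneg hγ.le hc0) (sq_nonneg μ)) (sub_nonneg.2 hQM)]
  · nlinarith [mul_nonneg (sub_nonneg.2 h2) (mul_nonneg ha.le hX),
      mul_nonneg (mul_nonneg (sub_nonneg.2 hγ1) hc0) (sub_nonneg.2 hZX),
      mul_nonneg (mul_nonneg hc0 (sq_nonneg μ)) (sub_nonneg.2 hQM)]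

private lemma hasDerivAt_barrier (μ γ : ℝ) {r : ℝ} (hr : 0 < r) :
    HasDerivAt (fun s : ℝ => s ^ (-γ) * Real.exp (-μ * s))
      (-(γ / r + μ) * (r ^ (-γ) * Real.exp (-μ * r))) r := by
  have h1 : HasDerivAt (fun s : ℝ => s ^ (-γ)) (-γ * r ^ (-γ - 1)) r :=
    Real.hasDerivAt_rpow_const (Or.inl hr.ne')
  have h2 : HasDerivAt (fun s : ℝ => Real.exp (-μ * s)) (Real.exp (-μ * r) * (-μ)) r := by
    have hlin : HasDerivAt (fun s : ℝ => -μ * s) (-μ) r := by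
      simpa using (hasDerivAt_id r).const_mul (-μ)
    exact hlin.exp
  have := h1.mul h2
  refine this.congr_deriv ?_
  have hrpow : r ^ (-γ - 1) = r ^ (-γ) / r := Real.rpow_sub_one hr.ne' _
  rw [hrpow]
  field_simp
  ring

/-- Lower barrier estimate (critical case, `p ≥ 2`): for `h(r) = r^{-γ} e^{-μ r}` and under the
sign conditions on the coefficients, the radial `p`-Laplacian of `h` satisfies the stated
inequality uniformly in `μ > 0` and `r > 0`. -/
theorem stmt4 (N : ℕ) (p μ γ : ℝ) (hN : 2 ≤ N) (hp2 : 2 ≤ p) (hpN : p < N)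
    (hμ : 0 < μ) (hγ : 0 < γ)
    (h1 : (N : ℝ) - 1 - 2 * γ * (p - 1) ≤ 0) (h2 : γ * ((N : ℝ) - p - γ * (p - 1)) ≤ 0)
    (h : ℝ → ℝ) (hh : ∀ r : ℝ, h r = r ^ (-γ) * Real.exp (-μ * r)) :
    ∀ r : ℝ, 0 < r →
      -((deriv (fun s => |deriv h s| ^ (p - 2) * deriv h s) r)
          + ((N : ℝ) - 1) / r * (|deriv h r| ^ (p - 2) * deriv h r))
        + μ ^ p * (p - 1) * (h r) ^ (p - 1)
      ≤ μ * (γ ^ (p - 2) * ((N : ℝ) - 1 - 2 * γ * (p - 1))) / r ^ (p - 1) * (h r) ^ (p - 1)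
        + (γ ^ (p - 1) * ((N : ℝ) - p - γ * (p - 1))) / r ^ p * (h r) ^ (p - 1) := by
  intro r hr
  have hApos : 0 < h r := by rw [hh]; positivity
  have hapos : 0 < γ / r := div_pos hγ hr
  have hbr : 0 < γ / r + μ := by positivity
  -- derivative of h at positive points
  have hDh : ∀ s : ℝ, 0 < s → HasDerivAt h (-(γ / s + μ) * h s) s := by
    intro s hs
    have hfun : h = fun s : ℝ => s ^ (-γ) * Real.exp (-μ * s) := funext hh
    rw [hfun]
    exact hasDerivAt_barrier μ γ hs
  -- pointwise form of the flux function
  have hgpt : ∀ s : ℝ, 0 < s → |deriv h s| ^ (p - 2) * deriv h s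
      = -(((γ / s + μ) * h s) ^ (p - 1)) := by
    intro s hs
    have hhs : 0 < h s := by rw [hh]; positivity
    have hbs : 0 < γ / s + μ := by positivity
    rw [(hDh s hs).deriv]
    have habs : |-(γ / s + μ) * h s| = (γ / s + μ) * h s := by
      rw [abs_of_nonpos (by nlinarith [mul_pos hbs hhs])]; ring
    rw [habs, rpow_split (mul_pos hbs hhs).ne' (show p - 1 = (p - 2) + 1 by ring)]
    ring
  -- derivative of the flux function at r
  have hev : (fun s => |deriv h s| ^ (p - 2) * deriv h s)
      =ᶠ[nhds r] (fun s => -(((γ / s + μ) * (s ^ (-γ) * Real.exp (-μ * s))) ^ (p - 1))) := by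
    filter_upwards [Ioi_mem_nhds hr] with s hs
    rw [hgpt s hs, hh s]
  have hgderiv : deriv (fun s => |deriv h s| ^ (p - 2) * deriv h s) r
      = (p - 1) * ((γ / r + μ) ^ (p - 2) * (h r) ^ (p - 2))
          * ((γ / (r * r) + (γ / r + μ) ^ 2) * h r) := by
    rw [hev.deriv_eq]
    have hu : HasDerivAt (fun s : ℝ => γ / s + μ) (-(γ / (r * r))) r := by
      have hfun : (fun s : ℝ => γ / s + μ) = (fun s : ℝ => γ * s⁻¹ + μ) := by
        funext s; rw [div_eq_mul_inv]
      rw [hfun, show -(γ / (r * r)) = γ * -(r ^ 2)⁻¹ by ring]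
      exact ((hasDerivAt_inv hr.ne').const_mul γ).add_const μ
    have hv : HasDerivAt (fun s : ℝ => s ^ (-γ) * Real.exp (-μ * s))
        (-(γ / r + μ) * h r) r := by
      rw [hh r]; exact hasDerivAt_barrier μ γ hr
    have hψ : HasDerivAt (fun s : ℝ => (γ / s + μ) * (s ^ (-γ) * Real.exp (-μ * s)))
        (-(γ / (r * r)) * (r ^ (-γ) * Real.exp (-μ * r)) + (γ / r + μ) * (-(γ / r + μ) * h r))
        r := hu.mul hv
    have hne : (γ / r + μ) * (r ^ (-γ) * Real.exp (-μ * r)) ≠ 0 := by positivity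
    have hpow := (hψ.rpow_const (p := p - 1) (Or.inl hne)).neg
    rw [(show HasDerivAt (fun s : ℝ => -(((γ / s + μ) * (s ^ (-γ) * Real.exp (-μ * s))) ^ (p - 1))) _ r from hpow).deriv, ← hh r, show p - 1 - 1 = p - 2 from by ring,
      Real.mul_rpow hbr.le hApos.le]
    ring
  -- algebraic rewriting into atoms
  have e1 : ((γ / r + μ) * h r) ^ (p - 2) = (γ / r + μ) ^ (p - 2) * (h r) ^ (p - 2) :=
    Real.mul_rpow hbr.le hApos.le
  have e2 : ((γ / r + μ) * h r) ^ (p - 1)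
      = ((γ / r + μ) ^ (p - 2) * (h r) ^ (p - 2)) * ((γ / r + μ) * h r) := by
    rw [rpow_split (mul_pos hbr hApos).ne' (show p - 1 = (p - 2) + 1 by ring), e1]
  have e3 : (h r) ^ (p - 1) = (h r) ^ (p - 2) * h r :=
    rpow_split hApos.ne' (by ring)
  have hgptr : |deriv h r| ^ (p - 2) * deriv h r
      = -(((γ / r + μ) ^ (p - 2) * (h r) ^ (p - 2)) * ((γ / r + μ) * h r)) := by
    rw [hgpt r hr, e2]
  have hR2 : (0:ℝ) < r ^ (p - 2) := Real.rpow_pos_of_pos hr _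
  have eγ2 : γ ^ (p - 2) = (γ / r) ^ (p - 2) * r ^ (p - 2) := by
    rw [← Real.mul_rpow hapos.le hr.le, div_mul_cancel₀ _ hr.ne']
  have eγ1 : γ ^ (p - 1) = (γ / r) ^ (p - 1) * r ^ (p - 1) := by
    rw [← Real.mul_rpow hapos.le hr.le, div_mul_cancel₀ _ hr.ne']
  have ea1 : (γ / r) ^ (p - 1) = (γ / r) ^ (p - 2) * (γ / r) :=
    rpow_split hapos.ne' (by ring)
  have er1 : r ^ (p - 1) = r ^ (p - 2) * r := rpow_split hr.ne' (by ring)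
  have erp : r ^ p = r ^ (p - 2) * r * r := by
    rw [rpow_split hr.ne' (show p = (p - 1) + 1 by ring), er1]
  have e4 : μ ^ p = μ ^ (p - 2) * μ * μ := by
    rw [rpow_split hμ.ne' (show p = (p - 1) + 1 by ring),
      rpow_split hμ.ne' (show p - 1 = (p - 2) + 1 by ring)]
  have eT3 : μ ^ p * (p - 1) * (h r) ^ (p - 1)
      = (μ ^ (p - 2) * (μ * μ) * (p - 1)) * ((h r) ^ (p - 2) * h r) := by
    rw [e4, e3]; ring
  have eT1 : μ * (γ ^ (p - 2) * ((N : ℝ) - 1 - 2 * γ * (p - 1))) / r ^ (p - 1) * (h r) ^ (p - 1)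
      = (μ * ((γ / r) ^ (p - 2) * ((N : ℝ) - 1 - 2 * γ * (p - 1))) / r)
          * ((h r) ^ (p - 2) * h r) := by
    rw [e3, eγ2, er1]
    field_simp
  have eT2 : (γ ^ (p - 1) * ((N : ℝ) - p - γ * (p - 1))) / r ^ p * (h r) ^ (p - 1)
      = (((γ / r) ^ (p - 2) * (γ / r)) * ((N : ℝ) - p - γ * (p - 1)) / r)
          * ((h r) ^ (p - 2) * h r) := by
    rw [e3, eγ1, ea1, er1, erp]
    field_simp
  rw [hgderiv, hgptr, eT3, eT1, eT2]
  -- the scalar inequality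
  have hQP : (γ / r) ^ (p - 2) ≤ (γ / r + μ) ^ (p - 2) :=
    Real.rpow_le_rpow hapos.le (by linarith) (by linarith)
  have hQM : μ ^ (p - 2) ≤ (γ / r + μ) ^ (p - 2) :=
    Real.rpow_le_rpow hμ.le (by linarith) (by linarith)
  have hsup : (γ / r) * (γ / r) ^ (p - 2) + μ * μ ^ (p - 2)
      ≤ (γ / r + μ) * (γ / r + μ) ^ (p - 2) := by
    have A1 := mul_le_mul_of_nonneg_left hQP hapos.le
    have A2 := mul_le_mul_of_nonneg_left hQM hμ.le
    nlinarith [A1, A2]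
  have h2' : (N : ℝ) - p - γ * (p - 1) ≤ 0 := nonpos_of_mul_nonpos_right h2 hγ
  have key := scalar_key (p - 1) γ ((N : ℝ) - 1) (γ / r) μ ((γ / r) ^ (p - 2))
    ((γ / r + μ) ^ (p - 2)) (μ ^ (p - 2)) (by linarith) hγ hapos hμ hQP hQM hsup
    (by linarith) (by linarith)
  have hEA : (0:ℝ) < (h r) ^ (p - 2) * h r := by positivity
  have main : -((p - 1) * ((γ / r + μ) ^ (p - 2)) * (γ / (r * r) + (γ / r + μ) ^ 2))
        + ((N : ℝ) - 1) / r * ((γ / r + μ) ^ (p - 2) * (γ / r + μ))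
        + μ ^ (p - 2) * (μ * μ) * (p - 1)
      ≤ μ * ((γ / r) ^ (p - 2) * ((N : ℝ) - 1 - 2 * γ * (p - 1))) / r
        + ((γ / r) ^ (p - 2) * (γ / r)) * ((N : ℝ) - p - γ * (p - 1)) / r := by
    rw [← sub_nonneg]
    have hid : ((μ * ((γ / r) ^ (p - 2) * ((N : ℝ) - 1 - 2 * γ * (p - 1))) / r
          + ((γ / r) ^ (p - 2) * (γ / r)) * ((N : ℝ) - p - γ * (p - 1)) / r)
        - (-((p - 1) * ((γ / r + μ) ^ (p - 2)) * (γ / (r * r) + (γ / r + μ) ^ 2))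
            + ((N : ℝ) - 1) / r * ((γ / r + μ) ^ (p - 2) * (γ / r + μ))
            + μ ^ (p - 2) * (μ * μ) * (p - 1))) * γ
        = ((p - 1) * (γ / r) ^ 2 * ((γ / r + μ) ^ (p - 2) - (γ / r) ^ (p - 2))
            + γ * (p - 1) * ((γ / r + μ) ^ 2 * ((γ / r + μ) ^ (p - 2))
              - μ ^ 2 * (μ ^ (p - 2)) - (γ / r) ^ 2 * ((γ / r) ^ (p - 2))
              - 2 * μ * (γ / r) * ((γ / r) ^ (p - 2))))
          - ((N : ℝ) - 1) * (γ / r) * ((γ / r + μ) * ((γ / r + μ) ^ (p - 2))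
              - μ * ((γ / r) ^ (p - 2)) - (γ / r) * ((γ / r) ^ (p - 2))) := by
      field_simp
      ring
    exact (mul_nonneg_iff_of_pos_right hγ).1 (by rw [hid]; linarith [key])
  nlinarith [mul_le_mul_of_nonneg_right main hEA.le]
end
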